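/- For all integers c ≥ 0 and i ≥ 0, setting k = c + i, the average-case PAR with respect to party 2 of the bounded-bisection-auction tiling T_{c,i} for the function A_k is at least its average-case PAR with respect to party 1; consequently the average-case subjective PAR of T_{c,i} equals (c+5)/4 − 1/2^{c+2} + c/2^{k+2}. -/

import Mathlib

open Finset

/-- The value space `{0,…,2^k−1} × {0,…,2^k−1}`. -/
def Vk (k : ℕ) : Finset (ℕ × ℕ) := Finset.range (2 ^ k) ×ˢ Finset.range (2 ^ k)

/-- A tiling of `Vk k`: a finite collection of nonempty rectangles partitioning `Vk k`. -/
def IsTiling (k : ℕ) (T : Finset (Finset (ℕ × ℕ))) : Prop :=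
  (∀ R ∈ T, ∃ S S' : Finset ℕ, R = S ×ˢ S') ∧
    (∀ R ∈ T, R.Nonempty) ∧ (∀ R ∈ T, R ⊆ Vk k) ∧ ∀ x ∈ Vk k, ∃! R, R ∈ T ∧ x ∈ R

/-- `f`-monochromaticity of a tiling. -/
def Mono {β : Type} (f : ℕ × ℕ → β) (T : Finset (Finset (ℕ × ℕ))) : Prop :=
  ∀ R ∈ T, ∀ x ∈ R, ∀ y ∈ R, f x = f y

/-- The tile of `T` containing `x` (union of all tiles containing `x`; for a
tiling this is exactly the unique tile containing `x`). -/
def tileOf (T : Finset (Finset (ℕ × ℕ))) (x : ℕ × ℕ) : Finset (ℕ × ℕ) :=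
  (T.filter fun R => x ∈ R).sup id

/-- The ideal region of `x`: the level set of `f x` inside `Vk k`. -/
def ideal {β : Type} [DecidableEq β] (k : ℕ) (f : ℕ × ℕ → β) (x : ℕ × ℕ) : Finset (ℕ × ℕ) :=
  (Vk k).filter fun y => f y = f x

/-- Average-case objective PAR of a tiling w.r.t. the uniform distribution. -/
def avgObjPAR {β : Type} [DecidableEq β] (k : ℕ) (f : ℕ × ℕ → β)
    (T : Finset (Finset (ℕ × ℕ))) : ℚ :=
  (∑ x ∈ Vk k, ((ideal k f x).card : ℚ) / ((tileOf T x).card : ℚ)) / 2 ^ (2 * k)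

/-- Average-case PAR with respect to party 1. -/
def avgPAR1 {β : Type} [DecidableEq β] (k : ℕ) (f : ℕ × ℕ → β)
    (T : Finset (Finset (ℕ × ℕ))) : ℚ :=
  (∑ x ∈ Vk k,
      (((Finset.range (2 ^ k)).filter fun y => f (x.1, y) = f x).card : ℚ) /
        (((Finset.range (2 ^ k)).filter fun y => (x.1, y) ∈ tileOf T x).card : ℚ)) /
    2 ^ (2 * k)

/-- Average-case PAR with respect to party 2. -/
def avgPAR2 {β : Type} [DecidableEq β] (k : ℕ) (f : ℕ × ℕ → β)
    (T : Finset (Finset (ℕ × ℕ))) : ℚ :=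
  (∑ x ∈ Vk k,
      (((Finset.range (2 ^ k)).filter fun y => f (y, x.2) = f x).card : ℚ) /
        (((Finset.range (2 ^ k)).filter fun y => (y, x.2) ∈ tileOf T x).card : ℚ)) /
    2 ^ (2 * k)

/-- The millionaires function: `1` if `x1 ≥ x2`, else `2`. -/
def Mil (x : ℕ × ℕ) : ℕ := if x.2 ≤ x.1 then 1 else 2

/-- The second-price auction function. -/
def Auc (x : ℕ × ℕ) : ℕ × ℕ := if x.2 ≤ x.1 then (1, x.2) else (2, x.1)

/-- Translate a tile by `(a, a)`. -/
def shiftTile (a : ℕ) (R : Finset (ℕ × ℕ)) : Finset (ℕ × ℕ) :=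
  R.image fun p => (p.1 + a, p.2 + a)

/-- The bisection-protocol tiling `B_k`. -/
def Btile : ℕ → Finset (Finset (ℕ × ℕ))
  | 0 => {{(0, 0)}}
  | j + 1 =>
    Btile j ∪ (Btile j).image (shiftTile (2 ^ j)) ∪
      {Finset.range (2 ^ j) ×ˢ Finset.Ico (2 ^ j) (2 ^ (j + 1)),
        Finset.Ico (2 ^ j) (2 ^ (j + 1)) ×ˢ Finset.range (2 ^ j)}

/-- The bounded-bisection-auction tiling `T_{c,i}`. -/
def BBA : ℕ → ℕ → Finset (Finset (ℕ × ℕ))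
  | 0, i =>
    (Finset.range (2 ^ i)).image (fun p => Finset.Ico p (2 ^ i) ×ˢ ({p} : Finset ℕ)) ∪
      (Finset.range (2 ^ i - 1)).image fun p => ({p} : Finset ℕ) ×ˢ Finset.Ico (p + 1) (2 ^ i)
  | c + 1, i =>
    BBA c i ∪ (BBA c i).image (shiftTile (2 ^ (c + i))) ∪
      (Finset.range (2 ^ (c + i))).image
        (fun j => Finset.Ico (2 ^ (c + i)) (2 ^ (c + i + 1)) ×ˢ ({j} : Finset ℕ)) ∪
      (Finset.range (2 ^ (c + i))).image fun j =>
        ({j} : Finset ℕ) ×ˢ Finset.Ico (2 ^ (c + i)) (2 ^ (c + i + 1))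

/-- The public-good function: `true` iff `x1 + x2 ≥ 2^k − 1` ("Build"). -/
def PG (k : ℕ) (x : ℕ × ℕ) : Bool := decide (2 ^ k - 1 ≤ x.1 + x.2)

/-- The truthful public-good function: `none` = "Do Not Build". -/
def TPG (c : ℕ) (x : ℕ × ℕ) : Option (ℕ × ℕ) :=
  if x.1 + x.2 < c then none else some (c - x.2, c - x.1)

/-- The tiling of `Vk k` into singleton cells (sealed-bid auction). -/
def sealedTiling (k : ℕ) : Finset (Finset (ℕ × ℕ)) :=
  (Vk k).image fun x => ({x} : Finset (ℕ × ℕ))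

namespace S16

def tileF : ℕ → ℕ → ℕ × ℕ → Finset (ℕ × ℕ)
  | 0, i, x =>
    if x.2 ≤ x.1 then Finset.Ico x.2 (2 ^ i) ×ˢ ({x.2} : Finset ℕ)
    else ({x.1} : Finset ℕ) ×ˢ Finset.Ico (x.1 + 1) (2 ^ i)
  | c + 1, i, x =>
    if x.1 < 2 ^ (c + i) then
      (if x.2 < 2 ^ (c + i) then tileF c i x
       else ({x.1} : Finset ℕ) ×ˢ Finset.Ico (2 ^ (c + i)) (2 ^ (c + i + 1)))
    else
      (if x.2 < 2 ^ (c + i) then Finset.Ico (2 ^ (c + i)) (2 ^ (c + i + 1)) ×ˢ ({x.2} : Finset ℕ)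
       else shiftTile (2 ^ (c + i)) (tileF c i (x.1 - 2 ^ (c + i), x.2 - 2 ^ (c + i))))

def Wf : ℕ → ℕ → ℕ × ℕ → ℕ
  | 0, i, x => if x.2 ≤ x.1 then 2 ^ i - x.2 else 1
  | c + 1, i, x =>
    if x.1 < 2 ^ (c + i) then (if x.2 < 2 ^ (c + i) then Wf c i x else 1)
    else (if x.2 < 2 ^ (c + i) then 2 ^ (c + i)
          else Wf c i (x.1 - 2 ^ (c + i), x.2 - 2 ^ (c + i)))

def Hf : ℕ → ℕ → ℕ × ℕ → ℕ
  | 0, i, x => if x.2 ≤ x.1 then 1 else 2 ^ i - (x.1 + 1)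
  | c + 1, i, x =>
    if x.1 < 2 ^ (c + i) then (if x.2 < 2 ^ (c + i) then Hf c i x else 2 ^ (c + i))
    else (if x.2 < 2 ^ (c + i) then 1
          else Hf c i (x.1 - 2 ^ (c + i), x.2 - 2 ^ (c + i)))

lemma mem_shiftTile {a : ℕ} {R : Finset (ℕ × ℕ)} {x : ℕ × ℕ} :
    x ∈ shiftTile a R ↔ ∃ p ∈ R, p.1 + a = x.1 ∧ p.2 + a = x.2 := by
  simp [shiftTile, Prod.ext_iff]

lemma shiftTile_prod (a : ℕ) (S T : Finset ℕ) :
    shiftTile a (S ×ˢ T) = (S.image fun s => s + a) ×ˢ (T.image fun t => t + a) := by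
  ext ⟨u, v⟩
  simp only [mem_shiftTile, Finset.mem_product, Finset.mem_image]
  aesop

lemma tileF_spec (c : ℕ) : ∀ i : ℕ, ∀ x : ℕ × ℕ, x.1 < 2 ^ (c + i) → x.2 < 2 ^ (c + i) →
    ∃ S T : Finset ℕ, tileF c i x = S ×ˢ T ∧ S ⊆ Finset.range (2 ^ (c + i)) ∧
      T ⊆ Finset.range (2 ^ (c + i)) ∧ x.1 ∈ S ∧ x.2 ∈ T ∧
      S.card = Wf c i x ∧ T.card = Hf c i x := by
  induction c with
  | zero =>
    intro i x h1 h2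
    simp only [Nat.zero_add] at *
    by_cases h : x.2 ≤ x.1
    · exact ⟨Finset.Ico x.2 (2 ^ i), {x.2}, by simp [tileF, h],
        fun y hy => by simp at *; omega, by simp [h2], by simp; omega, by simp,
        by simp [Wf, h], by simp [Hf, h]⟩
    · exact ⟨{x.1}, Finset.Ico (x.1 + 1) (2 ^ i), by simp [tileF, h],
        by simp [h1], fun y hy => by simp at *; omega, by simp,
        by simp; omega, by simp [Wf, h], by simp [Hf, h]⟩
  | succ c ih =>
    intro i x h1 h2
    have hm : 2 ^ (c + 1 + i) = 2 ^ (c + i) * 2 := by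
      rw [show c + 1 + i = (c + i) + 1 by omega, pow_succ]
    by_cases ha : x.1 < 2 ^ (c + i) <;> by_cases hb : x.2 < 2 ^ (c + i)
    · -- lower-left
      obtain ⟨S, T, hST, hS, hT, hxS, hxT, hcS, hcT⟩ := ih i x ha hb
      refine ⟨S, T, ?_, ?_, ?_, hxS, hxT, ?_, ?_⟩
      · simp [tileF, ha, hb, hST]
      · exact hS.trans (by intro y; simp; omega)
      · exact hT.trans (by intro y; simp; omega)
      · simp [Wf, ha, hb, hcS]
      · simp [Hf, ha, hb, hcT]
    · -- upper-left: column tile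
      refine ⟨{x.1}, Finset.Ico (2 ^ (c + i)) (2 ^ (c + i + 1)), ?_, ?_, ?_, ?_, ?_, ?_, ?_⟩
      · simp [tileF, ha, hb]
      · intro y; simp; omega
      · intro y; simp; omega
      · simp
      · simp; omega
      · simp [Wf, ha, hb]
      · simp [Hf, ha, hb, Nat.card_Ico]; omega
    · -- lower-right: row tile
      refine ⟨Finset.Ico (2 ^ (c + i)) (2 ^ (c + i + 1)), {x.2}, ?_, ?_, ?_, ?_, ?_, ?_, ?_⟩
      · simp [tileF, ha, hb]
      · intro y; simp; omega
      · intro y; simp; omega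
      · simp; omega
      · simp
      · simp [Wf, ha, hb, Nat.card_Ico]; omega
      · simp [Hf, ha, hb]
    · -- upper-right
      obtain ⟨S, T, hST, hS, hT, hxS, hxT, hcS, hcT⟩ :=
        ih i (x.1 - 2 ^ (c + i), x.2 - 2 ^ (c + i)) (by simp; omega) (by simp; omega)
      refine ⟨S.image fun s => s + 2 ^ (c + i), T.image fun t => t + 2 ^ (c + i),
        ?_, ?_, ?_, ?_, ?_, ?_, ?_⟩
      · simp [tileF, ha, hb, hST, shiftTile_prod]
      · intro y hy; simp at hy ⊢; obtain ⟨s, hs, rfl⟩ := hy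
        have := hS hs; simp at this; omega
      · intro y hy; simp at hy ⊢; obtain ⟨t, ht, rfl⟩ := hy
        have := hT ht; simp at this; omega
      · simp only [Finset.mem_image]; exact ⟨_, hxS, by simp; omega⟩
      · simp only [Finset.mem_image]; exact ⟨_, hxT, by simp; omega⟩
      · rw [Finset.card_image_of_injective _ (add_left_injective _), hcS]
        simp [Wf, ha, hb]
      · rw [Finset.card_image_of_injective _ (add_left_injective _), hcT]
        simp [Hf, ha, hb]

lemma BBA_subset (c : ℕ) : ∀ i : ℕ, ∀ R ∈ BBA c i, R ⊆ Vk (c + i) := by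
  induction c with
  | zero =>
    intro i R hR
    simp only [BBA, Finset.mem_union, Finset.mem_image, Finset.mem_range] at hR
    rcases hR with ⟨p, hp, rfl⟩ | ⟨p, hp, rfl⟩ <;>
      · intro y hy
        simp only [Finset.mem_product, Finset.mem_Ico, Finset.mem_singleton] at hy
        simp only [Vk, Finset.mem_product, Finset.mem_range, Nat.zero_add]
        omega
  | succ c ih =>
    intro i R hR
    have hm : 2 ^ (c + 1 + i) = 2 ^ (c + i) * 2 := by
      rw [show c + 1 + i = (c + i) + 1 by omega, pow_succ]
    simp only [BBA, Finset.mem_union, Finset.mem_image, Finset.mem_range] at hR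
    rcases hR with ((hA | ⟨R', hR', rfl⟩) | ⟨j, hj, rfl⟩) | ⟨j, hj, rfl⟩
    · intro y hy
      have := ih i R hA hy
      simp only [Vk, Finset.mem_product, Finset.mem_range] at this ⊢
      omega
    · intro y hy
      rw [mem_shiftTile] at hy
      obtain ⟨p, hp, e1, e2⟩ := hy
      have := ih i R' hR' hp
      simp only [Vk, Finset.mem_product, Finset.mem_range] at this ⊢
      omega
    · intro y hy
      simp only [Finset.mem_product, Finset.mem_Ico, Finset.mem_singleton,
        Finset.mem_range] at hy
      simp only [Vk, Finset.mem_product, Finset.mem_range]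
      rw [show c + i + 1 = (c + i) + 1 by omega, pow_succ] at hy
      omega
    · intro y hy
      simp only [Finset.mem_product, Finset.mem_Ico, Finset.mem_singleton,
        Finset.mem_range] at hy
      simp only [Vk, Finset.mem_product, Finset.mem_range]
      rw [show c + i + 1 = (c + i) + 1 by omega, pow_succ] at hy
      omega

lemma tileF_mem_BBA (c : ℕ) : ∀ i : ℕ, ∀ x : ℕ × ℕ, x.1 < 2 ^ (c + i) → x.2 < 2 ^ (c + i) →
    tileF c i x ∈ BBA c i := by
  induction c with
  | zero =>
    intro i x h1 h2
    simp only [Nat.zero_add] at *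
    by_cases h : x.2 ≤ x.1
    · simp only [BBA, Finset.mem_union, Finset.mem_image, Finset.mem_range]
      exact Or.inl ⟨x.2, by omega, by simp [tileF, h]⟩
    · simp only [BBA, Finset.mem_union, Finset.mem_image, Finset.mem_range]
      exact Or.inr ⟨x.1, by omega, by simp [tileF, h]⟩
  | succ c ih =>
    intro i x h1 h2
    have hm : 2 ^ (c + 1 + i) = 2 ^ (c + i) * 2 := by
      rw [show c + 1 + i = (c + i) + 1 by omega, pow_succ]
    simp only [BBA, Finset.mem_union, Finset.mem_image, Finset.mem_range]
    by_cases ha : x.1 < 2 ^ (c + i) <;> by_cases hb : x.2 < 2 ^ (c + i)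
    · exact Or.inl (Or.inl (Or.inl (by simpa [tileF, ha, hb] using ih i x ha hb)))
    · exact Or.inr ⟨x.1, ha, by simp [tileF, ha, hb]⟩
    · exact Or.inl (Or.inr ⟨x.2, hb, by simp [tileF, ha, hb]⟩)
    · refine Or.inl (Or.inl (Or.inr ⟨tileF c i (x.1 - 2 ^ (c + i), x.2 - 2 ^ (c + i)),
        ih i _ (by simp; omega) (by simp; omega), ?_⟩))
      simp [tileF, ha, hb]

lemma BBA_eq_tileF (c : ℕ) : ∀ i : ℕ, ∀ R ∈ BBA c i, ∀ x ∈ R, R = tileF c i x := by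
  induction c with
  | zero =>
    intro i R hR x hx
    simp only [BBA, Finset.mem_union, Finset.mem_image, Finset.mem_range] at hR
    rcases hR with ⟨p, hp, rfl⟩ | ⟨p, hp, rfl⟩
    · simp only [Finset.mem_product, Finset.mem_Ico, Finset.mem_singleton] at hx
      obtain ⟨⟨hpx, hx1⟩, hx2⟩ := hx
      have h : x.2 ≤ x.1 := by omega
      subst hx2
      simp [tileF, h]
    · simp only [Finset.mem_product, Finset.mem_Ico, Finset.mem_singleton] at hx
      obtain ⟨hx1, hx2, hx2'⟩ := hx
      have h : ¬ (x.2 ≤ x.1) := by omega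
      subst hx1
      simp [tileF, h]
  | succ c ih =>
    intro i R hR x hx
    have hm : 2 ^ (c + 1 + i) = 2 ^ (c + i) * 2 := by
      rw [show c + 1 + i = (c + i) + 1 by omega, pow_succ]
    simp only [BBA, Finset.mem_union, Finset.mem_image, Finset.mem_range] at hR
    rcases hR with ((hA | ⟨R', hR', rfl⟩) | ⟨j, hj, rfl⟩) | ⟨j, hj, rfl⟩
    · have hs := BBA_subset c i R hA hx
      simp [Vk] at hs
      simp [tileF, hs.1, hs.2]
      exact ih i R hA x hx
    · rw [mem_shiftTile] at hx
      obtain ⟨p, hp, e1, e2⟩ := hx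
      have hs := BBA_subset c i R' hR' hp
      simp only [Vk, Finset.mem_product, Finset.mem_range] at hs
      have ha : ¬ (x.1 < 2 ^ (c + i)) := by omega
      have hb : ¬ (x.2 < 2 ^ (c + i)) := by omega
      simp only [tileF, if_neg ha, if_neg hb]
      have hxp : (x.1 - 2 ^ (c + i), x.2 - 2 ^ (c + i)) = p := by
        ext <;> simp <;> omega
      rw [hxp, ← ih i R' hR' p hp]
    · simp only [Finset.mem_product, Finset.mem_Ico, Finset.mem_singleton] at hx
      obtain ⟨⟨hx1, hx1'⟩, hx2⟩ := hx
      have ha : ¬ (x.1 < 2 ^ (c + i)) := by omega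
      have hb : x.2 < 2 ^ (c + i) := by omega
      simp [tileF, ha, hb, hx2, hj]
    · simp only [Finset.mem_product, Finset.mem_Ico, Finset.mem_singleton] at hx
      obtain ⟨hx1, hx2, hx2'⟩ := hx
      have ha : x.1 < 2 ^ (c + i) := by omega
      have hb : ¬ (x.2 < 2 ^ (c + i)) := by omega
      simp [tileF, ha, hb, hx1, hj]

lemma tileOf_BBA (c i : ℕ) (x : ℕ × ℕ) (h1 : x.1 < 2 ^ (c + i)) (h2 : x.2 < 2 ^ (c + i)) :
    tileOf (BBA c i) x = tileF c i x := by
  have hmem : x ∈ tileF c i x := by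
    obtain ⟨S, T, hST, _, _, hxS, hxT, _, _⟩ := tileF_spec c i x h1 h2
    rw [hST]; exact Finset.mem_product.2 ⟨hxS, hxT⟩
  have : (BBA c i).filter (fun R => x ∈ R) = {tileF c i x} := by
    ext R
    simp only [Finset.mem_filter, Finset.mem_singleton]
    constructor
    · rintro ⟨hR, hxR⟩; exact BBA_eq_tileF c i R hR x hxR
    · rintro rfl; exact ⟨tileF_mem_BBA c i x h1 h2, hmem⟩
  rw [tileOf, this, Finset.sup_singleton, id]
lemma Wf_of_lt (c : ℕ) : ∀ i : ℕ, ∀ x : ℕ × ℕ, x.1 < x.2 → Wf c i x = 1 := by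
  induction c with
  | zero => intro i x h; simp [Wf, show ¬ (x.2 ≤ x.1) by omega]
  | succ c ih =>
    intro i x h
    by_cases ha : x.1 < 2 ^ (c + i) <;> by_cases hb : x.2 < 2 ^ (c + i)
    · simp only [Wf, if_pos ha, if_pos hb]; exact ih i x h
    · simp [Wf, ha, hb]
    · omega
    · simp only [Wf, if_neg ha, if_neg hb]; exact ih i _ (by simp; omega)

lemma Hf_of_le (c : ℕ) : ∀ i : ℕ, ∀ x : ℕ × ℕ, x.2 ≤ x.1 → Hf c i x = 1 := by
  induction c with
  | zero => intro i x h; simp [Hf, h]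
  | succ c ih =>
    intro i x h
    by_cases ha : x.1 < 2 ^ (c + i) <;> by_cases hb : x.2 < 2 ^ (c + i)
    · simp only [Hf, if_pos ha, if_pos hb]; exact ih i x h
    · omega
    · simp [Hf, ha, hb]
    · simp only [Hf, if_neg ha, if_neg hb]; exact ih i _ (by simp; omega)

lemma den2_card (c i : ℕ) (x : ℕ × ℕ) (h1 : x.1 < 2 ^ (c + i)) (h2 : x.2 < 2 ^ (c + i)) :
    ((Finset.range (2 ^ (c + i))).filter fun y => (y, x.2) ∈ tileF c i x).card = Wf c i x := by
  obtain ⟨S, T, hST, hS, hT, hxS, hxT, hcS, hcT⟩ := tileF_spec c i x h1 h2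
  rw [hST, ← hcS]
  congr 1
  ext y
  simp only [Finset.mem_filter, Finset.mem_range, Finset.mem_product]
  exact ⟨fun h => h.2.1, fun h => ⟨by simpa using hS h, h, hxT⟩⟩

lemma den1_card (c i : ℕ) (x : ℕ × ℕ) (h1 : x.1 < 2 ^ (c + i)) (h2 : x.2 < 2 ^ (c + i)) :
    ((Finset.range (2 ^ (c + i))).filter fun y => (x.1, y) ∈ tileF c i x).card = Hf c i x := by
  obtain ⟨S, T, hST, hS, hT, hxS, hxT, hcS, hcT⟩ := tileF_spec c i x h1 h2
  rw [hST, ← hcT]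
  congr 1
  ext y
  simp only [Finset.mem_filter, Finset.mem_range, Finset.mem_product]
  exact ⟨fun h => h.2.2, fun h => ⟨by simpa using hT h, hxS, h⟩⟩

lemma num2_card_le (k : ℕ) (x : ℕ × ℕ) (h : x.2 ≤ x.1) :
    ((Finset.range (2 ^ k)).filter fun y => Auc (y, x.2) = Auc x).card = 2 ^ k - x.2 := by
  have : ((Finset.range (2 ^ k)).filter fun y => Auc (y, x.2) = Auc x)
      = Finset.Ico x.2 (2 ^ k) := by
    ext y
    simp only [Finset.mem_filter, Finset.mem_range, Finset.mem_Ico, Auc, if_pos h]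
    split_ifs with h2 <;> simp [Prod.ext_iff] <;> omega
  rw [this, Nat.card_Ico]

lemma num2_card_lt (k : ℕ) (x : ℕ × ℕ) (h : x.1 < x.2) (h1 : x.1 < 2 ^ k) :
    ((Finset.range (2 ^ k)).filter fun y => Auc (y, x.2) = Auc x).card = 1 := by
  have : ((Finset.range (2 ^ k)).filter fun y => Auc (y, x.2) = Auc x)
      = {x.1} := by
    ext y
    simp only [Finset.mem_filter, Finset.mem_range, Finset.mem_singleton, Auc,
      if_neg (by omega : ¬ (x.2 ≤ x.1))]
    split_ifs with h2 <;> simp [Prod.ext_iff] <;> omega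
  rw [this, Finset.card_singleton]

lemma num1_card_le (k : ℕ) (x : ℕ × ℕ) (h : x.2 ≤ x.1) (h2 : x.2 < 2 ^ k) :
    ((Finset.range (2 ^ k)).filter fun y => Auc (x.1, y) = Auc x).card = 1 := by
  have : ((Finset.range (2 ^ k)).filter fun y => Auc (x.1, y) = Auc x)
      = {x.2} := by
    ext y
    simp only [Finset.mem_filter, Finset.mem_range, Finset.mem_singleton, Auc, if_pos h]
    split_ifs with h2' <;> simp [Prod.ext_iff] <;> omega
  rw [this, Finset.card_singleton]

lemma num1_card_lt (k : ℕ) (x : ℕ × ℕ) (h : x.1 < x.2) :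
    ((Finset.range (2 ^ k)).filter fun y => Auc (x.1, y) = Auc x).card = 2 ^ k - (x.1 + 1) := by
  have : ((Finset.range (2 ^ k)).filter fun y => Auc (x.1, y) = Auc x)
      = Finset.Ico (x.1 + 1) (2 ^ k) := by
    ext y
    simp only [Finset.mem_filter, Finset.mem_range, Finset.mem_Ico, Auc,
      if_neg (by omega : ¬ (x.2 ≤ x.1))]
    split_ifs with h2 <;> simp [Prod.ext_iff] <;> omega
  rw [this, Nat.card_Ico]
lemma sum_range_cast (n : ℕ) : ∑ b ∈ Finset.range n, (b : ℚ) = n * (n - 1) / 2 := by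
  induction n with
  | zero => simp
  | succ n ih => rw [Finset.sum_range_succ, ih]; push_cast; ring

lemma sum_range_double (n : ℕ) (g : ℕ → ℚ) :
    ∑ j ∈ Finset.range (2 * n), g j =
      ∑ j ∈ Finset.range n, g j + ∑ j ∈ Finset.range n, g (n + j) := by
  have h1 : ∑ j ∈ Finset.Ico 0 (2 * n), g j =
      ∑ j ∈ Finset.Ico 0 n, g j + ∑ j ∈ Finset.Ico n (2 * n), g j :=
    (Finset.sum_Ico_consecutive g (Nat.zero_le n) (by omega)).symm
  have h2 : ∑ j ∈ Finset.Ico n (2 * n), g j = ∑ j ∈ Finset.range n, g (n + j) := by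
    rw [Finset.sum_Ico_eq_sum_range, show 2 * n - n = n by omega]
  rw [Finset.range_eq_Ico, h1, h2, ← Finset.range_eq_Ico]

lemma sum_Vk_succ (k : ℕ) (f : ℕ × ℕ → ℚ) :
    ∑ x ∈ Vk (k + 1), f x =
      ((∑ a ∈ Finset.range (2 ^ k), ∑ b ∈ Finset.range (2 ^ k), f (a, b)) +
        ∑ a ∈ Finset.range (2 ^ k), ∑ b ∈ Finset.range (2 ^ k), f (2 ^ k + a, b)) +
      ((∑ a ∈ Finset.range (2 ^ k), ∑ b ∈ Finset.range (2 ^ k), f (a, 2 ^ k + b)) +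
        ∑ a ∈ Finset.range (2 ^ k), ∑ b ∈ Finset.range (2 ^ k), f (2 ^ k + a, 2 ^ k + b)) := by
  rw [Vk, Finset.sum_product, show (2 : ℕ) ^ (k + 1) = 2 * 2 ^ k by rw [pow_succ]; ring]
  simp only [sum_range_double]
  simp only [Finset.sum_add_distrib]
  ring

lemma filter_le_range (n b : ℕ) :
    (Finset.range n).filter (fun a => b ≤ a) = Finset.Ico b n := by
  ext a; simp; omega

lemma sumP2 (c : ℕ) : ∀ i : ℕ,
    ∑ x ∈ Vk (c + i), (if x.2 ≤ x.1 then 1 / ((Wf c i x : ℚ)) else 0) =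
      2 ^ (c + i) + c * 2 ^ (c + i) / 2 := by
  induction c with
  | zero =>
    intro i
    rw [Nat.zero_add, Vk, Finset.sum_product, Finset.sum_comm]
    have h : ∀ b ∈ Finset.range (2 ^ i),
        (∑ a ∈ Finset.range (2 ^ i),
          (if (a, b).2 ≤ (a, b).1 then 1 / ((Wf 0 i (a, b) : ℚ)) else 0)) = 1 := by
      intro b hb
      simp only [Finset.mem_range] at hb
      have h2 : ∀ a ∈ Finset.range (2 ^ i),
          (if (a, b).2 ≤ (a, b).1 then 1 / ((Wf 0 i (a, b) : ℚ)) else 0) =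
            (if b ≤ a then 1 / (((2 ^ i - b : ℕ) : ℚ)) else 0) := by
        intro a _; by_cases h : b ≤ a <;> simp [Wf, h]
      rw [Finset.sum_congr rfl h2, ← Finset.sum_filter, filter_le_range, Finset.sum_const,
        Nat.card_Ico, nsmul_eq_mul, mul_one_div, div_self]
      exact Nat.cast_ne_zero.2 (by omega)
    rw [Finset.sum_congr rfl h, Finset.sum_const, Finset.card_range, nsmul_eq_mul]
    push_cast; ring
  | succ c ih =>
    intro i
    rw [show c + 1 + i = (c + i) + 1 by omega,
      sum_Vk_succ (c + i) (fun x => if x.2 ≤ x.1 then 1 / ((Wf (c + 1) i x : ℚ)) else 0)]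
    have hQ1 : ∀ a ∈ Finset.range (2 ^ (c + i)), ∀ b ∈ Finset.range (2 ^ (c + i)),
        (if b ≤ a then 1 / ((Wf (c + 1) i (a, b) : ℚ)) else 0) =
          (if b ≤ a then 1 / ((Wf c i (a, b) : ℚ)) else 0) := by
      intro a ha b hb
      simp only [Finset.mem_range] at ha hb
      simp [Wf, ha, hb]
    have hQ2 : ∀ a ∈ Finset.range (2 ^ (c + i)), ∀ b ∈ Finset.range (2 ^ (c + i)),
        (if b ≤ 2 ^ (c + i) + a then 1 / ((Wf (c + 1) i (2 ^ (c + i) + a, b) : ℚ)) else 0) =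
          1 / (2 ^ (c + i) : ℚ) := by
      intro a ha b hb
      simp only [Finset.mem_range] at ha hb
      rw [if_pos (by omega)]
      simp only [Wf, if_neg (by omega : ¬ (2 ^ (c + i) + a < 2 ^ (c + i))), if_pos hb]
      norm_num
    have hQ3 : ∀ a ∈ Finset.range (2 ^ (c + i)), ∀ b ∈ Finset.range (2 ^ (c + i)),
        (if 2 ^ (c + i) + b ≤ a then 1 / ((Wf (c + 1) i (a, 2 ^ (c + i) + b) : ℚ)) else 0) =
          0 := by
      intro a ha b hb
      simp only [Finset.mem_range] at ha hb
      rw [if_neg (by omega)]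
    have hQ4 : ∀ a ∈ Finset.range (2 ^ (c + i)), ∀ b ∈ Finset.range (2 ^ (c + i)),
        (if 2 ^ (c + i) + b ≤ 2 ^ (c + i) + a then
            1 / ((Wf (c + 1) i (2 ^ (c + i) + a, 2 ^ (c + i) + b) : ℚ)) else 0) =
          (if b ≤ a then 1 / ((Wf c i (a, b) : ℚ)) else 0) := by
      intro a ha b hb
      simp only [Finset.mem_range] at ha hb
      simp only [Wf, if_neg (by omega : ¬ (2 ^ (c + i) + a < 2 ^ (c + i))),
        if_neg (by omega : ¬ (2 ^ (c + i) + b < 2 ^ (c + i))), Nat.add_sub_cancel_left]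
      by_cases h : b ≤ a
      · rw [if_pos (by omega), if_pos h]
      · rw [if_neg (by omega), if_neg h]
    have hIH := ih i
    rw [Vk, Finset.sum_product] at hIH
    rw [Finset.sum_congr rfl (fun a ha => Finset.sum_congr rfl (fun b hb => hQ1 a ha b hb)),
      Finset.sum_congr rfl (fun a ha => Finset.sum_congr rfl (fun b hb => hQ2 a ha b hb)),
      Finset.sum_congr rfl (fun a ha => Finset.sum_congr rfl (fun b hb => hQ3 a ha b hb)),
      Finset.sum_congr rfl (fun a ha => Finset.sum_congr rfl (fun b hb => hQ4 a ha b hb)),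
      hIH]
    simp only [Finset.sum_const, Finset.card_range, nsmul_eq_mul, Finset.sum_const]
    rw [show (c + i) + 1 = c + 1 + i by omega, show c + 1 + i = (c + i) + 1 by omega, pow_succ]
    push_cast
    have hpos : (2 : ℚ) ^ (c + i) ≠ 0 := by positivity
    field_simp
    ring
lemma if_swap0 (a b : ℕ) (t : ℚ) :
    (if b ≤ a then (0 : ℚ) else t) = if a + 1 ≤ b then t else 0 := by
  by_cases h : b ≤ a
  · rw [if_pos h, if_neg (by omega)]
  · rw [if_neg h, if_pos (by omega)]

lemma sumP1 (c : ℕ) : ∀ i : ℕ,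
    ∑ x ∈ Vk (c + i), (if x.2 ≤ x.1 then 0 else 1 / ((Hf c i x : ℚ))) =
      2 ^ (c + i) - 2 ^ c + c * 2 ^ (c + i) / 2 := by
  induction c with
  | zero =>
    intro i
    rw [Nat.zero_add, Vk, Finset.sum_product]
    have h : ∀ a ∈ Finset.range (2 ^ i),
        (∑ b ∈ Finset.range (2 ^ i),
          (if (a, b).2 ≤ (a, b).1 then 0 else 1 / ((Hf 0 i (a, b) : ℚ)))) =
            (if a + 1 < 2 ^ i then (1 : ℚ) else 0) := by
      intro a ha
      simp only [Finset.mem_range] at ha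
      have h2 : ∀ b ∈ Finset.range (2 ^ i),
          (if (a, b).2 ≤ (a, b).1 then (0 : ℚ) else 1 / ((Hf 0 i (a, b) : ℚ))) =
            (if a + 1 ≤ b then 1 / (((2 ^ i - (a + 1) : ℕ) : ℚ)) else 0) := by
        intro b _
        rw [← if_swap0]
        by_cases h : b ≤ a <;> simp [Hf, h]
      rw [Finset.sum_congr rfl h2, ← Finset.sum_filter, filter_le_range, Finset.sum_const,
        Nat.card_Ico, nsmul_eq_mul, mul_one_div]
      by_cases ha' : a + 1 < 2 ^ i
      · rw [if_pos ha', div_self (Nat.cast_ne_zero.2 (by omega))]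
      · rw [if_neg ha', show 2 ^ i - (a + 1) = 0 by omega]
        simp
    rw [Finset.sum_congr rfl h, ← Finset.sum_filter,
      show (Finset.range (2 ^ i)).filter (fun a => a + 1 < 2 ^ i) = Finset.range (2 ^ i - 1)
        by ext a; simp; omega,
      Finset.sum_const, Finset.card_range, nsmul_eq_mul, mul_one,
      Nat.cast_sub (Nat.one_le_two_pow)]
    push_cast; ring
  | succ c ih =>
    intro i
    rw [show c + 1 + i = (c + i) + 1 by omega,
      sum_Vk_succ (c + i) (fun x => if x.2 ≤ x.1 then 0 else 1 / ((Hf (c + 1) i x : ℚ)))]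
    have hQ1 : ∀ a ∈ Finset.range (2 ^ (c + i)), ∀ b ∈ Finset.range (2 ^ (c + i)),
        (if b ≤ a then (0 : ℚ) else 1 / ((Hf (c + 1) i (a, b) : ℚ))) =
          (if b ≤ a then 0 else 1 / ((Hf c i (a, b) : ℚ))) := by
      intro a ha b hb
      simp only [Finset.mem_range] at ha hb
      simp [Hf, ha, hb]
    have hQ2 : ∀ a ∈ Finset.range (2 ^ (c + i)), ∀ b ∈ Finset.range (2 ^ (c + i)),
        (if b ≤ 2 ^ (c + i) + a then (0 : ℚ)
          else 1 / ((Hf (c + 1) i (2 ^ (c + i) + a, b) : ℚ))) = 0 := by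
      intro a ha b hb
      simp only [Finset.mem_range] at ha hb
      rw [if_pos (by omega)]
    have hQ3 : ∀ a ∈ Finset.range (2 ^ (c + i)), ∀ b ∈ Finset.range (2 ^ (c + i)),
        (if 2 ^ (c + i) + b ≤ a then (0 : ℚ)
          else 1 / ((Hf (c + 1) i (a, 2 ^ (c + i) + b) : ℚ))) = 1 / (2 ^ (c + i) : ℚ) := by
      intro a ha b hb
      simp only [Finset.mem_range] at ha hb
      rw [if_neg (by omega)]
      simp only [Hf, if_pos ha, if_neg (by omega : ¬ (2 ^ (c + i) + b < 2 ^ (c + i)))]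
      norm_num
    have hQ4 : ∀ a ∈ Finset.range (2 ^ (c + i)), ∀ b ∈ Finset.range (2 ^ (c + i)),
        (if 2 ^ (c + i) + b ≤ 2 ^ (c + i) + a then (0 : ℚ)
          else 1 / ((Hf (c + 1) i (2 ^ (c + i) + a, 2 ^ (c + i) + b) : ℚ))) =
          (if b ≤ a then 0 else 1 / ((Hf c i (a, b) : ℚ))) := by
      intro a ha b hb
      simp only [Finset.mem_range] at ha hb
      simp only [Hf, if_neg (by omega : ¬ (2 ^ (c + i) + a < 2 ^ (c + i))),
        if_neg (by omega : ¬ (2 ^ (c + i) + b < 2 ^ (c + i))), Nat.add_sub_cancel_left]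
      by_cases h : b ≤ a
      · rw [if_pos (by omega), if_pos h]
      · rw [if_neg (by omega), if_neg h]
    have hIH := ih i
    rw [Vk, Finset.sum_product] at hIH
    rw [Finset.sum_congr rfl (fun a ha => Finset.sum_congr rfl (fun b hb => hQ1 a ha b hb)),
      Finset.sum_congr rfl (fun a ha => Finset.sum_congr rfl (fun b hb => hQ2 a ha b hb)),
      Finset.sum_congr rfl (fun a ha => Finset.sum_congr rfl (fun b hb => hQ3 a ha b hb)),
      Finset.sum_congr rfl (fun a ha => Finset.sum_congr rfl (fun b hb => hQ4 a ha b hb)),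
      hIH]
    simp only [Finset.sum_const, Finset.card_range, nsmul_eq_mul]
    rw [show (c + i) + 1 = c + 1 + i by omega, show c + 1 + i = (c + i) + 1 by omega, pow_succ]
    push_cast
    have hpos : (2 : ℚ) ^ (c + i) ≠ 0 := by positivity
    field_simp
    ring
lemma sumS2 (c : ℕ) : ∀ i : ℕ,
    ∑ x ∈ Vk (c + i), (if x.2 ≤ x.1 then ((2 ^ (c + i) : ℚ) - x.2) / ((Wf c i x : ℚ)) else 1) =
      2 ^ (c + i) * 2 ^ (c + i) +
        2 ^ (c + i) * (c * 2 ^ (c + i) + c + 2 ^ (c + i) - 2 ^ i) / 4 := by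
  induction c with
  | zero =>
    intro i
    rw [Nat.zero_add, Vk, Finset.sum_product]
    have h : ∀ a ∈ Finset.range (2 ^ i), ∀ b ∈ Finset.range (2 ^ i),
        (if b ≤ a then ((2 ^ i : ℚ) - b) / ((Wf 0 i (a, b) : ℚ)) else 1) = 1 := by
      intro a ha b hb
      simp only [Finset.mem_range] at ha hb
      by_cases h : b ≤ a
      · rw [if_pos h]
        simp only [Wf, if_pos h]
        rw [Nat.cast_sub (le_of_lt hb)]
        push_cast
        rw [div_self]
        have : (b : ℚ) < 2 ^ i := by exact_mod_cast hb
        intro hzero; linarith [sub_eq_zero.1 hzero]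
      · rw [if_neg h]
    rw [Finset.sum_congr rfl (fun a ha => Finset.sum_congr rfl (fun b hb => h a ha b hb))]
    simp only [Finset.sum_const, Finset.card_range, nsmul_eq_mul, mul_one]
    push_cast; ring
  | succ c ih =>
    intro i
    rw [show c + 1 + i = (c + i) + 1 by omega,
      sum_Vk_succ (c + i)
        (fun x => if x.2 ≤ x.1 then ((2 ^ ((c + i) + 1) : ℚ) - x.2) / ((Wf (c + 1) i x : ℚ))
          else 1)]
    have hQ1 : ∀ a ∈ Finset.range (2 ^ (c + i)), ∀ b ∈ Finset.range (2 ^ (c + i)),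
        (if b ≤ a then ((2 ^ ((c + i) + 1) : ℚ) - b) / ((Wf (c + 1) i (a, b) : ℚ)) else 1) =
          (if b ≤ a then ((2 ^ (c + i) : ℚ) - b) / ((Wf c i (a, b) : ℚ)) else 1) +
            (2 ^ (c + i) : ℚ) * (if b ≤ a then 1 / ((Wf c i (a, b) : ℚ)) else 0) := by
      intro a ha b hb
      simp only [Finset.mem_range] at ha hb
      simp only [Wf, if_pos ha, if_pos hb]
      by_cases h : b ≤ a
      · rw [if_pos h, if_pos h, if_pos h, pow_succ]
        rw [mul_one_div, ← add_div]
        congr 1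
        ring
      · rw [if_neg h, if_neg h, if_neg h]; ring
    have hQ2 : ∀ a ∈ Finset.range (2 ^ (c + i)), ∀ b ∈ Finset.range (2 ^ (c + i)),
        (if b ≤ 2 ^ (c + i) + a then
            ((2 ^ ((c + i) + 1) : ℚ) - b) / ((Wf (c + 1) i (2 ^ (c + i) + a, b) : ℚ)) else 1) =
          ((2 ^ ((c + i) + 1) : ℚ) - b) * ((2 ^ (c + i) : ℚ))⁻¹ := by
      intro a ha b hb
      simp only [Finset.mem_range] at ha hb
      rw [if_pos (by omega)]
      simp only [Wf, if_neg (by omega : ¬ (2 ^ (c + i) + a < 2 ^ (c + i))), if_pos hb]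
      push_cast
      rw [div_eq_mul_inv]
    have hQ3 : ∀ a ∈ Finset.range (2 ^ (c + i)), ∀ b ∈ Finset.range (2 ^ (c + i)),
        (if 2 ^ (c + i) + b ≤ a then
            ((2 ^ ((c + i) + 1) : ℚ) - (2 ^ (c + i) + b : ℕ)) /
              ((Wf (c + 1) i (a, 2 ^ (c + i) + b) : ℚ)) else 1) = 1 := by
      intro a ha b hb
      simp only [Finset.mem_range] at ha hb
      rw [if_neg (by omega)]
    have hQ4 : ∀ a ∈ Finset.range (2 ^ (c + i)), ∀ b ∈ Finset.range (2 ^ (c + i)),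
        (if 2 ^ (c + i) + b ≤ 2 ^ (c + i) + a then
            ((2 ^ ((c + i) + 1) : ℚ) - (2 ^ (c + i) + b : ℕ)) /
              ((Wf (c + 1) i (2 ^ (c + i) + a, 2 ^ (c + i) + b) : ℚ)) else 1) =
          (if b ≤ a then ((2 ^ (c + i) : ℚ) - b) / ((Wf c i (a, b) : ℚ)) else 1) := by
      intro a ha b hb
      simp only [Finset.mem_range] at ha hb
      simp only [Wf, if_neg (by omega : ¬ (2 ^ (c + i) + a < 2 ^ (c + i))),
        if_neg (by omega : ¬ (2 ^ (c + i) + b < 2 ^ (c + i))), Nat.add_sub_cancel_left]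
      by_cases h : b ≤ a
      · rw [if_pos (by omega), if_pos h]
        congr 1
        push_cast [pow_succ]
        ring
      · rw [if_neg (by omega), if_neg h]
    have hIH := ih i
    rw [Vk, Finset.sum_product] at hIH
    have hIHP := sumP2 c i
    rw [Vk, Finset.sum_product] at hIHP
    rw [Finset.sum_congr rfl (fun a ha => Finset.sum_congr rfl (fun b hb => hQ1 a ha b hb)),
      Finset.sum_congr rfl (fun a ha => Finset.sum_congr rfl (fun b hb => hQ2 a ha b hb)),
      Finset.sum_congr rfl (fun a ha => Finset.sum_congr rfl (fun b hb => hQ3 a ha b hb)),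
      Finset.sum_congr rfl (fun a ha => Finset.sum_congr rfl (fun b hb => hQ4 a ha b hb))]
    simp only [Finset.sum_add_distrib, ← Finset.mul_sum]
    rw [hIH, hIHP]
    simp only [← Finset.sum_mul, Finset.sum_sub_distrib, Finset.sum_const, Finset.card_range,
      nsmul_eq_mul, sum_range_cast, mul_one]
    rw [show (c + i) + 1 = c + 1 + i by omega, show c + 1 + i = (c + i) + 1 by omega, pow_succ]
    push_cast
    have hpos : (2 : ℚ) ^ (c + i) ≠ 0 := by positivity
    field_simp
    ring
lemma sumS1 (c : ℕ) : ∀ i : ℕ,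
    ∑ x ∈ Vk (c + i),
      (if x.2 ≤ x.1 then 1 else ((2 ^ (c + i) : ℚ) - x.1 - 1) / ((Hf c i x : ℚ))) =
      2 ^ (c + i) * (2 ^ (c + i) + 1) / 2 +
        2 ^ (c + i) * (c * (2 ^ (c + i) - 1) + 2 ^ (c + i) - 2 ^ i) / 4 +
        2 ^ (c + i) * (2 ^ (c + i) - 2 ^ c) / 2 := by
  induction c with
  | zero =>
    intro i
    rw [Nat.zero_add, Vk, Finset.sum_product]
    have h : ∀ a ∈ Finset.range (2 ^ i), ∀ b ∈ Finset.range (2 ^ i),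
        (if b ≤ a then (1 : ℚ) else ((2 ^ i : ℚ) - a - 1) / ((Hf 0 i (a, b) : ℚ))) = 1 := by
      intro a ha b hb
      simp only [Finset.mem_range] at ha hb
      by_cases h : b ≤ a
      · rw [if_pos h]
      · rw [if_neg h]
        simp only [Hf, if_neg h]
        rw [Nat.cast_sub (by omega : a + 1 ≤ 2 ^ i)]
        push_cast
        rw [show (2 ^ i : ℚ) - a - 1 = 2 ^ i - (a + 1) by ring, div_self]
        have : (a : ℚ) + 1 < 2 ^ i := by exact_mod_cast (by omega : a + 1 < 2 ^ i)
        intro hzero; linarith [sub_eq_zero.1 hzero]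
    rw [Finset.sum_congr rfl (fun a ha => Finset.sum_congr rfl (fun b hb => h a ha b hb))]
    simp only [Finset.sum_const, Finset.card_range, nsmul_eq_mul, mul_one]
    push_cast; ring
  | succ c ih =>
    intro i
    rw [show c + 1 + i = (c + i) + 1 by omega,
      sum_Vk_succ (c + i)
        (fun x => if x.2 ≤ x.1 then 1
          else ((2 ^ ((c + i) + 1) : ℚ) - x.1 - 1) / ((Hf (c + 1) i x : ℚ)))]
    have hQ1 : ∀ a ∈ Finset.range (2 ^ (c + i)), ∀ b ∈ Finset.range (2 ^ (c + i)),
        (if b ≤ a then (1 : ℚ)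
            else ((2 ^ ((c + i) + 1) : ℚ) - a - 1) / ((Hf (c + 1) i (a, b) : ℚ))) =
          (if b ≤ a then (1 : ℚ) else ((2 ^ (c + i) : ℚ) - a - 1) / ((Hf c i (a, b) : ℚ))) +
            (2 ^ (c + i) : ℚ) * (if b ≤ a then 0 else 1 / ((Hf c i (a, b) : ℚ))) := by
      intro a ha b hb
      simp only [Finset.mem_range] at ha hb
      simp only [Hf, if_pos ha, if_pos hb]
      by_cases h : b ≤ a
      · rw [if_pos h, if_pos h, if_pos h]; ring
      · rw [if_neg h, if_neg h, if_neg h, pow_succ, mul_one_div, ← add_div]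
        congr 1
        ring
    have hQ2 : ∀ a ∈ Finset.range (2 ^ (c + i)), ∀ b ∈ Finset.range (2 ^ (c + i)),
        (if b ≤ 2 ^ (c + i) + a then (1 : ℚ)
            else ((2 ^ ((c + i) + 1) : ℚ) - (2 ^ (c + i) + a : ℕ) - 1) /
              ((Hf (c + 1) i (2 ^ (c + i) + a, b) : ℚ))) = 1 := by
      intro a ha b hb
      simp only [Finset.mem_range] at ha hb
      rw [if_pos (by omega)]
    have hQ3 : ∀ a ∈ Finset.range (2 ^ (c + i)), ∀ b ∈ Finset.range (2 ^ (c + i)),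
        (if 2 ^ (c + i) + b ≤ a then (1 : ℚ)
            else ((2 ^ ((c + i) + 1) : ℚ) - a - 1) /
              ((Hf (c + 1) i (a, 2 ^ (c + i) + b) : ℚ))) =
          ((2 ^ ((c + i) + 1) : ℚ) - a - 1) * ((2 ^ (c + i) : ℚ))⁻¹ := by
      intro a ha b hb
      simp only [Finset.mem_range] at ha hb
      rw [if_neg (by omega)]
      simp only [Hf, if_pos ha, if_neg (by omega : ¬ (2 ^ (c + i) + b < 2 ^ (c + i)))]
      push_cast
      rw [div_eq_mul_inv]
    have hQ4 : ∀ a ∈ Finset.range (2 ^ (c + i)), ∀ b ∈ Finset.range (2 ^ (c + i)),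
        (if 2 ^ (c + i) + b ≤ 2 ^ (c + i) + a then (1 : ℚ)
            else ((2 ^ ((c + i) + 1) : ℚ) - (2 ^ (c + i) + a : ℕ) - 1) /
              ((Hf (c + 1) i (2 ^ (c + i) + a, 2 ^ (c + i) + b) : ℚ))) =
          (if b ≤ a then (1 : ℚ) else ((2 ^ (c + i) : ℚ) - a - 1) / ((Hf c i (a, b) : ℚ))) := by
      intro a ha b hb
      simp only [Finset.mem_range] at ha hb
      simp only [Hf, if_neg (by omega : ¬ (2 ^ (c + i) + a < 2 ^ (c + i))),
        if_neg (by omega : ¬ (2 ^ (c + i) + b < 2 ^ (c + i))), Nat.add_sub_cancel_left]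
      by_cases h : b ≤ a
      · rw [if_pos (by omega), if_pos h]
      · rw [if_neg (by omega), if_neg h]
        congr 1
        push_cast [pow_succ]
        ring
    have hIH := ih i
    rw [Vk, Finset.sum_product] at hIH
    have hIHP := sumP1 c i
    rw [Vk, Finset.sum_product] at hIHP
    rw [Finset.sum_congr rfl (fun a ha => Finset.sum_congr rfl (fun b hb => hQ1 a ha b hb)),
      Finset.sum_congr rfl (fun a ha => Finset.sum_congr rfl (fun b hb => hQ2 a ha b hb)),
      Finset.sum_congr rfl (fun a ha => Finset.sum_congr rfl (fun b hb => hQ3 a ha b hb)),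
      Finset.sum_congr rfl (fun a ha => Finset.sum_congr rfl (fun b hb => hQ4 a ha b hb))]
    simp only [Finset.sum_add_distrib, ← Finset.mul_sum]
    rw [hIH, hIHP]
    simp only [← Finset.sum_mul, Finset.sum_sub_distrib, Finset.sum_const, Finset.card_range,
      nsmul_eq_mul, sum_range_cast, mul_one]
    rw [show (c + i) + 1 = c + 1 + i by omega, show c + 1 + i = (c + i) + 1 by omega, pow_succ]
    push_cast
    have hpos : (2 : ℚ) ^ (c + i) ≠ 0 := by positivity
    field_simp
    ring
lemma par2_sum_eq (c i : ℕ) :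
    (∑ x ∈ Vk (c + i),
      (((Finset.range (2 ^ (c + i))).filter fun y => Auc (y, x.2) = Auc x).card : ℚ) /
        (((Finset.range (2 ^ (c + i))).filter fun y =>
            (y, x.2) ∈ tileOf (BBA c i) x).card : ℚ)) =
    ∑ x ∈ Vk (c + i),
      (if x.2 ≤ x.1 then ((2 ^ (c + i) : ℚ) - x.2) / ((Wf c i x : ℚ)) else 1) := by
  apply Finset.sum_congr rfl
  intro x hx
  simp only [Vk, Finset.mem_product, Finset.mem_range] at hx
  rw [tileOf_BBA c i x hx.1 hx.2, den2_card c i x hx.1 hx.2]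
  by_cases h : x.2 ≤ x.1
  · rw [num2_card_le _ x h, if_pos h, Nat.cast_sub (le_of_lt hx.2)]
    push_cast
    rfl
  · rw [num2_card_lt _ x (by omega) hx.1, if_neg h, Wf_of_lt c i x (by omega)]
    norm_num

lemma par1_sum_eq (c i : ℕ) :
    (∑ x ∈ Vk (c + i),
      (((Finset.range (2 ^ (c + i))).filter fun y => Auc (x.1, y) = Auc x).card : ℚ) /
        (((Finset.range (2 ^ (c + i))).filter fun y =>
            (x.1, y) ∈ tileOf (BBA c i) x).card : ℚ)) =
    ∑ x ∈ Vk (c + i),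
      (if x.2 ≤ x.1 then 1 else ((2 ^ (c + i) : ℚ) - x.1 - 1) / ((Hf c i x : ℚ))) := by
  apply Finset.sum_congr rfl
  intro x hx
  simp only [Vk, Finset.mem_product, Finset.mem_range] at hx
  rw [tileOf_BBA c i x hx.1 hx.2, den1_card c i x hx.1 hx.2]
  by_cases h : x.2 ≤ x.1
  · rw [num1_card_le _ x h hx.2, if_pos h, Hf_of_le c i x h]
    norm_num
  · rw [num1_card_lt _ x (by omega), if_neg h]
    congr 1
    rw [Nat.cast_sub (by omega : x.1 + 1 ≤ 2 ^ (c + i))]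
    push_cast
    ring

lemma avgPAR2_eq' (c i : ℕ) :
    avgPAR2 (c + i) Auc (BBA c i) =
      (2 ^ (c + i) * 2 ^ (c + i) +
        2 ^ (c + i) * (c * 2 ^ (c + i) + c + 2 ^ (c + i) - 2 ^ i) / 4) / 2 ^ (2 * (c + i)) := by
  rw [avgPAR2, par2_sum_eq, sumS2]

lemma avgPAR1_eq' (c i : ℕ) :
    avgPAR1 (c + i) Auc (BBA c i) =
      (2 ^ (c + i) * (2 ^ (c + i) + 1) / 2 +
        2 ^ (c + i) * (c * (2 ^ (c + i) - 1) + 2 ^ (c + i) - 2 ^ i) / 4 +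
        2 ^ (c + i) * (2 ^ (c + i) - 2 ^ c) / 2) / 2 ^ (2 * (c + i)) := by
  rw [avgPAR1, par1_sum_eq, sumS1]

lemma par_le (c i : ℕ) : avgPAR1 (c + i) Auc (BBA c i) ≤ avgPAR2 (c + i) Auc (BBA c i) := by
  rw [avgPAR1_eq', avgPAR2_eq']
  have hd : (0 : ℚ) < 2 ^ (2 * (c + i)) := by positivity
  rw [div_le_div_iff_of_pos_right hd]
  have hc : (1 : ℚ) ≤ 2 ^ c := one_le_pow₀ (by norm_num)
  have hk : (0 : ℚ) < 2 ^ (c + i) := by positivity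
  have hcc : (0 : ℚ) ≤ (c : ℚ) := Nat.cast_nonneg c
  nlinarith [mul_nonneg (le_of_lt hk) (by linarith : (0 : ℚ) ≤ 2 ^ c + (c : ℚ) - 1)]

lemma avgPAR2_eq (c i : ℕ) :
    avgPAR2 (c + i) Auc (BBA c i) =
      ((c : ℚ) + 5) / 4 - 1 / 2 ^ (c + 2) + (c : ℚ) / 2 ^ (c + i + 2) := by
  rw [avgPAR2_eq']
  have h1 : (2 : ℚ) ^ c ≠ 0 := by positivity
  have h2 : (2 : ℚ) ^ i ≠ 0 := by positivity
  rw [two_mul]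
  simp only [pow_add]
  field_simp
  ring
end S16

/-- with `k = c + i`, the average-case PAR w.r.t. party 2 of
`T_{c,i}` for `A_k` is at least the average-case PAR w.r.t. party 1;
consequently the average-case subjective PAR of `T_{c,i}` equals
`(c+5)/4 − 1/2^{c+2} + c/2^{k+2}`. -/
theorem stmt16 (c i : ℕ) :
    avgPAR1 (c + i) Auc (BBA c i) ≤ avgPAR2 (c + i) Auc (BBA c i) ∧
      max (avgPAR1 (c + i) Auc (BBA c i)) (avgPAR2 (c + i) Auc (BBA c i)) =
        ((c : ℚ) + 5) / 4 - 1 / 2 ^ (c + 2) + (c : ℚ) / 2 ^ (c + i + 2) := by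
  exact ⟨S16.par_le c i, by rw [max_eq_right (S16.par_le c i), S16.avgPAR2_eq c i]⟩
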